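/- arXiv:1811.03125 — 4 statements merged into one kernel-verified Lean document; each statement's English description precedes it below -/
import Mathlib

section
/- Let v_0, v_1, …, v_p be jointly independent random vectors with v_j ∈ L²(Ω, ℝ^{q_j}). Define z_0 = v_0 and, recursively for j = 1, …, p, z_j = v_j − Σ_{k=0}^{j−1} E_{v_j z_k} (E_{z_k z_k})^† z_k. Then the vectors z_0, …, z_p are pairwise uncorrelated, i.e. E_{z_i z_j} = 0 (the zero matrix) for all i ≠ j. -/
open MeasureTheory Matrix Finset Filter

noncomputable section

/-- The covariance matrix `E_{xy}` of two random vectors. -/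
def covM {Ω : Type} [MeasurableSpace Ω] (μ : Measure Ω) {m n : ℕ}
    (x : Ω → Fin m → ℝ) (y : Ω → Fin n → ℝ) : Matrix (Fin m) (Fin n) ℝ :=
  Matrix.of fun i j => ∫ ω, x ω i * y ω j ∂μ

/-- The squared norm `‖x‖²_Ω` of a random vector. -/
def sqnormOm {Ω : Type} [MeasurableSpace Ω] (μ : Measure Ω) {m : ℕ}
    (x : Ω → Fin m → ℝ) : ℝ :=
  ∫ ω, ∑ j, (x ω j) ^ 2 ∂μ

/-- The Moore–Penrose conditions. -/
def IsMoorePenrose {m n : ℕ} (A : Matrix (Fin m) (Fin n) ℝ)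
    (B : Matrix (Fin n) (Fin m) ℝ) : Prop :=
  A * B * A = A ∧ B * A * B = B ∧ (A * B)ᵀ = A * B ∧ (B * A)ᵀ = B * A

/-- The Moore–Penrose pseudoinverse `M^†`. -/
def mpinv {m n : ℕ} (A : Matrix (Fin m) (Fin n) ℝ) : Matrix (Fin n) (Fin m) ℝ :=
  Classical.epsilon fun B => IsMoorePenrose A B

/-- The symmetric positive semidefinite square root `M^{1/2}` of a PSD matrix. -/
def msqrtM {n : ℕ} (M : Matrix (Fin n) (Fin n) ℝ) : Matrix (Fin n) (Fin n) ℝ :=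
  Classical.epsilon fun S => S.PosSemidef ∧ S * S = M

/-- Squared Frobenius norm. -/
def frobSq {m n : ℕ} (A : Matrix (Fin m) (Fin n) ℝ) : ℝ := ∑ i, ∑ j, (A i j) ^ 2

/-- `(u, v, σ)` is a singular value decomposition of `A`:
`A = ∑ k σ_k u_k v_kᵀ` with orthonormal `u`'s and `v`'s and
nonnegative singular values in decreasing order. -/
def IsSVDOf {m n : ℕ} (A : Matrix (Fin m) (Fin n) ℝ)
    (u : ℕ → Fin m → ℝ) (v : ℕ → Fin n → ℝ) (σ : ℕ → ℝ) : Prop :=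
  (∀ k l, k < min m n → l < min m n → u k ⬝ᵥ u l = if k = l then (1 : ℝ) else 0) ∧
  (∀ k l, k < min m n → l < min m n → v k ⬝ᵥ v l = if k = l then (1 : ℝ) else 0) ∧
  (∀ k, 0 ≤ σ k) ∧ Antitone σ ∧ (∀ k, min m n ≤ k → σ k = 0) ∧
  A = ∑ k ∈ Finset.range (min m n), σ k • vecMulVec (u k) (v k)

/-- Random vectors `v_0, …, v_p` are jointly independent if whenever
`M⁽⁰⁾v_0(ω) + … + M⁽ᵖ⁾v_p(ω) = 0` almost everywhere, each `v_j(ω)` lies in the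
null space of `M⁽ʲ⁾` almost everywhere. -/
def JointlyIndependent {Ω : Type} [MeasurableSpace Ω] (μ : Measure Ω) {p : ℕ}
    {q : Fin (p + 1) → ℕ} (v : ∀ j, Ω → Fin (q j) → ℝ) : Prop :=
  ∀ (N : ℕ) (M : ∀ j, Matrix (Fin N) (Fin (q j)) ℝ),
    (∀ᵐ ω ∂μ, ∑ j, M j *ᵥ v j ω = 0) → ∀ j, ∀ᵐ ω ∂μ, M j *ᵥ v j ω = 0

section Aux

variable {Ω : Type} [MeasurableSpace Ω] {μ : Measure Ω}

lemma memLp_comp {m : ℕ} {x : Ω → Fin m → ℝ} (hx : MemLp x 2 μ) (a : Fin m) :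
    MemLp (fun ω => x ω a) 2 μ :=
  (ContinuousLinearMap.proj (R := ℝ) (φ := fun _ : Fin m => ℝ) a).comp_memLp' hx

lemma intg_mul {f g : Ω → ℝ} (hf : MemLp f 2 μ) (hg : MemLp g 2 μ) :
    Integrable (fun ω => f ω * g ω) μ := by
  have h : MemLp (f • g) 1 μ := hg.smul hf
  exact memLp_one_iff_integrable.mp h

lemma intg_comp_mul {m n : ℕ} {x : Ω → Fin m → ℝ} {y : Ω → Fin n → ℝ}
    (hx : MemLp x 2 μ) (hy : MemLp y 2 μ) (a : Fin m) (b : Fin n) :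
    Integrable (fun ω => x ω a * y ω b) μ :=
  intg_mul (memLp_comp hx a) (memLp_comp hy b)

lemma covM_transpose {m n : ℕ} (x : Ω → Fin m → ℝ) (y : Ω → Fin n → ℝ) :
    covM μ x y = (covM μ y x)ᵀ := by
  ext a b
  simp only [covM, Matrix.of_apply, Matrix.transpose_apply]
  congr 1; funext ω; ring

lemma exists_mp {n : ℕ} {A : Matrix (Fin n) (Fin n) ℝ} (hA : A.IsHermitian) :
    ∃ B, IsMoorePenrose A B := by
  classical
  set U : Matrix (Fin n) (Fin n) ℝ := (hA.eigenvectorUnitary : Matrix (Fin n) (Fin n) ℝ)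
  have hU : star U * U = 1 := Unitary.coe_star_mul_self hA.eigenvectorUnitary
  set d : Fin n → ℝ := hA.eigenvalues with hddef
  have hspec : A = U * diagonal d * star U := by
    have := hA.spectral_theorem
    simpa using this
  have hprod : ∀ f g : Fin n → ℝ, (U * diagonal f * star U) * (U * diagonal g * star U)
      = U * diagonal (fun i => f i * g i) * star U := by
    intro f g
    calc (U * diagonal f * star U) * (U * diagonal g * star U)
        = U * diagonal f * (star U * U) * diagonal g * star U := by
          simp only [Matrix.mul_assoc]
      _ = U * diagonal (fun i => f i * g i) * star U := by
          rw [hU, Matrix.mul_one]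
          rw [show U * diagonal f * diagonal g * star U
              = U * (diagonal f * diagonal g) * star U by simp only [Matrix.mul_assoc],
            diagonal_mul_diagonal]
  have hsym : ∀ f : Fin n → ℝ, (U * diagonal f * star U)ᵀ = U * diagonal f * star U := by
    intro f
    have hstar : star U = Uᵀ := rfl
    rw [hstar, Matrix.transpose_mul, Matrix.transpose_mul, Matrix.transpose_transpose,
      diagonal_transpose, Matrix.mul_assoc]
  refine ⟨U * diagonal (fun i => (d i)⁻¹) * star U, ?_, ?_, ?_, ?_⟩
  · rw [hspec, hprod, hprod]
    congr 2
    funext i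
    rcases eq_or_ne (d i) 0 with h | h <;> field_simp [h]
  · rw [hspec, hprod, hprod]
    congr 2
    funext i
    rcases eq_or_ne (d i) 0 with h | h <;> field_simp [h]
  · rw [hspec, hprod, hsym]
  · rw [hspec, hprod, hsym]

/-- Key vanishing lemma: if `E_{zz} M = 0` then `E_{xz} M = 0`. -/
lemma covM_mul_eq_zero {m n : ℕ} {x : Ω → Fin m → ℝ} {z : Ω → Fin n → ℝ}
    (hx : MemLp x 2 μ) (hz : MemLp z 2 μ) (M : Matrix (Fin n) (Fin n) ℝ)
    (hGM : covM μ z z * M = 0) :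
    covM μ x z * M = 0 := by
  ext a b
  set w : Ω → ℝ := fun ω => ∑ c, z ω c * M c b with hwdef
  have hwmem : MemLp w 2 μ := by
    have h := memLp_finset_sum' (μ := μ) (p := 2) Finset.univ
      (f := fun (c : Fin n) (ω : Ω) => z ω c * M c b)
      (fun c _ => by simpa [mul_comm] using (memLp_comp hz c).const_mul (M c b))
    have hweq : w = ∑ c : Fin n, fun ω => z ω c * M c b := by
      funext ω; rw [hwdef]; simp [Finset.sum_apply]
    rw [hweq]; exact h
  have hint_zz : ∀ c c' : Fin n, Integrable (fun ω => M c b * M c' b * (z ω c * z ω c')) μ :=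
    fun c c' => (intg_comp_mul hz hz c c').const_mul _
  have hww : (fun ω => w ω * w ω)
      = fun ω => ∑ c, ∑ c', M c b * M c' b * (z ω c * z ω c') := by
    funext ω
    rw [hwdef]
    rw [Finset.sum_mul_sum]
    exact Finset.sum_congr rfl fun c _ => Finset.sum_congr rfl fun c' _ => by ring
  have hintww : ∫ ω, w ω * w ω ∂μ = 0 := by
    rw [hww, integral_finset_sum _ (fun c _ => integrable_finset_sum _ (fun c' _ => hint_zz c c'))]
    have : ∀ c : Fin n, ∫ ω, ∑ c', M c b * M c' b * (z ω c * z ω c') ∂μ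
        = M c b * ((covM μ z z * M) c b) := by
      intro c
      rw [integral_finset_sum _ (fun c' _ => hint_zz c c'), Matrix.mul_apply, Finset.mul_sum]
      refine Finset.sum_congr rfl fun c' _ => ?_
      rw [integral_const_mul _ _]
      show M c b * M c' b * covM μ z z c c' = M c b * (covM μ z z c c' * M c' b)
      ring
    simp only [this, hGM, Matrix.zero_apply, mul_zero, Finset.sum_const_zero]
  have hw0 : ∀ᵐ ω ∂μ, w ω = 0 := by
    have hnn : (0 : Ω → ℝ) ≤ fun ω => w ω * w ω := fun ω => mul_self_nonneg (w ω)
    have := (integral_eq_zero_iff_of_nonneg hnn (intg_mul hwmem hwmem)).mp hintww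
    filter_upwards [this] with ω h
    exact mul_self_eq_zero.mp h
  show ∑ c, covM μ x z a c * M c b = 0
  have h1 : ∀ c : Fin n, covM μ x z a c * M c b = ∫ ω, x ω a * z ω c * M c b ∂μ := by
    intro c
    rw [show covM μ x z a c = ∫ ω, x ω a * z ω c ∂μ from rfl, ← integral_mul_const]
  rw [Finset.sum_congr rfl fun c _ => h1 c,
    ← integral_finset_sum _ (fun c _ => (intg_comp_mul hx hz a c).mul_const (M c b))]
  have h2 : ∫ ω, ∑ c, x ω a * z ω c * M c b ∂μ = ∫ ω, x ω a * w ω ∂μ := by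
    congr 1; funext ω
    rw [hwdef, Finset.mul_sum]
    exact Finset.sum_congr rfl fun c _ => by ring
  rw [h2]
  have h3 : ∫ ω, x ω a * w ω ∂μ = ∫ ω, (0:ℝ) ∂μ := by
    apply integral_congr_ae
    filter_upwards [hw0] with ω h
    rw [h, mul_zero]
  rw [h3, integral_zero]

/-- Bilinearity of `covM` for the Gram–Schmidt update. -/
lemma covM_sub_sum {m n : ℕ} {ι : Type} [Fintype ι] [DecidableEq ι] (s : Finset ι) {qk : ι → ℕ}
    (x : Ω → Fin m → ℝ) (y : ∀ k, Ω → Fin (qk k) → ℝ) (w : Ω → Fin n → ℝ)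
    (A : ∀ k, Matrix (Fin m) (Fin (qk k)) ℝ)
    (hx : MemLp x 2 μ) (hy : ∀ k, MemLp (y k) 2 μ) (hw : MemLp w 2 μ) :
    covM μ (fun ω => x ω - ∑ k ∈ s, A k *ᵥ y k ω) w
      = covM μ x w - ∑ k ∈ s, A k * covM μ (y k) w := by
  ext a b
  simp only [covM, Matrix.of_apply, Pi.sub_apply, Matrix.sub_apply, Matrix.sum_apply]
  have hintg1 : ∀ k ∈ s, Integrable (fun ω => ∑ c, A k a c * (y k ω c * w ω b)) μ :=
    fun k _ => integrable_finset_sum _ (fun c _ => (intg_comp_mul (hy k) hw c b).const_mul _)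
  have hexp : (fun ω => (x ω a - (∑ k ∈ s, A k *ᵥ y k ω) a) * w ω b)
      = fun ω => x ω a * w ω b - ∑ k ∈ s, ∑ c, A k a c * (y k ω c * w ω b) := by
    funext ω
    rw [sub_mul]
    congr 1
    rw [Finset.sum_apply, Finset.sum_mul]
    refine Finset.sum_congr rfl fun k _ => ?_
    rw [Matrix.mulVec, dotProduct, Finset.sum_mul]
    exact Finset.sum_congr rfl fun c _ => by ring
  rw [hexp, integral_sub (intg_comp_mul hx hw a b) (integrable_finset_sum _ hintg1)]
  congr 1
  rw [integral_finset_sum _ hintg1]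
  refine Finset.sum_congr rfl fun k _ => ?_
  rw [integral_finset_sum _ (fun c _ => (intg_comp_mul (hy k) hw c b).const_mul _),
    Matrix.mul_apply]
  exact Finset.sum_congr rfl fun c _ => by rw [integral_const_mul _ _]; rfl

end Aux


/-- the vectors `z_0, …, z_p` obtained from jointly independent
`v_0, …, v_p` by the recursive Gram–Schmidt-type procedure are pairwise
uncorrelated. -/
theorem stmt0 {Ω : Type} [MeasurableSpace Ω] (μ : Measure Ω) [IsProbabilityMeasure μ]
    (p : ℕ) (q : Fin (p + 1) → ℕ) (v z : ∀ j, Ω → Fin (q j) → ℝ)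
    (hv : ∀ j, MemLp (v j) 2 μ) (hz : ∀ j, MemLp (z j) 2 μ)
    (hindep : JointlyIndependent μ v)
    (h0 : z 0 = v 0)
    (hrec : ∀ j, 0 < j → ∀ ω, z j ω =
      v j ω - ∑ k ∈ Finset.Iio j,
        (covM μ (v j) (z k) * mpinv (covM μ (z k) (z k))) *ᵥ z k ω) :
    ∀ i j, i ≠ j → covM μ (z i) (z j) = 0 := by

  classical
  have hherm : ∀ i, (covM μ (z i) (z i)).IsHermitian := by
    intro i
    show (covM μ (z i) (z i))ᴴ = covM μ (z i) (z i)
    ext a b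
    rw [Matrix.conjTranspose_apply]
    simp only [star_trivial, covM, Matrix.of_apply]
    congr 1; funext ω; ring
  have hmp : ∀ i, IsMoorePenrose (covM μ (z i) (z i)) (mpinv (covM μ (z i) (z i))) :=
    fun i => Classical.epsilon_spec (exists_mp (hherm i))
  have key : ∀ N : ℕ, ∀ j i : Fin (p+1), (j : ℕ) ≤ N → i < j → covM μ (z j) (z i) = 0 := by
    intro N
    induction N with
    | zero =>
      intro j i hj hij
      rw [Fin.lt_def] at hij; omega
    | succ N ih =>
      intro j i hjN hij
      have hj0 : 0 < j := lt_of_le_of_lt (Fin.zero_le i) hij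
      have hzj : z j = fun ω => v j ω - ∑ k ∈ Finset.Iio j,
          (covM μ (v j) (z k) * mpinv (covM μ (z k) (z k))) *ᵥ z k ω := by
        funext ω; exact hrec j hj0 ω
      rw [hzj, covM_sub_sum (Finset.Iio j) (v j) (fun k => z k) (z i)
        (fun k => covM μ (v j) (z k) * mpinv (covM μ (z k) (z k)))
        (hv j) (fun k => hz k) (hz i)]
      have hsum : ∑ k ∈ Finset.Iio j,
          (covM μ (v j) (z k) * mpinv (covM μ (z k) (z k))) * covM μ (z k) (z i)
          = (covM μ (v j) (z i) * mpinv (covM μ (z i) (z i))) * covM μ (z i) (z i) := by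
        refine Finset.sum_eq_single i (fun k hk hki => ?_)
          (fun hnot => absurd (Finset.mem_Iio.mpr hij) hnot)
        have hkj : k < j := Finset.mem_Iio.mp hk
        have hkN : (k : ℕ) ≤ N := by
          have := Fin.lt_def.mp hkj; omega
        have hiN : (i : ℕ) ≤ N := by
          have := Fin.lt_def.mp hij; omega
        have hz0 : covM μ (z k) (z i) = 0 := by
          rcases lt_or_gt_of_ne hki with h | h
          · rw [covM_transpose, ih i k hiN h, Matrix.transpose_zero]
          · exact ih k i hkN h
        rw [hz0, Matrix.mul_zero]
      rw [hsum]
      have hfin : covM μ (v j) (z i) * (1 - mpinv (covM μ (z i) (z i)) * covM μ (z i) (z i))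
          = 0 := by
        apply covM_mul_eq_zero (hv j) (hz i)
        rw [Matrix.mul_sub, Matrix.mul_one, ← Matrix.mul_assoc, (hmp i).1, sub_self]
      calc covM μ (v j) (z i)
            - covM μ (v j) (z i) * mpinv (covM μ (z i) (z i)) * covM μ (z i) (z i)
          = covM μ (v j) (z i)
            * (1 - mpinv (covM μ (z i) (z i)) * covM μ (z i) (z i)) := by
            rw [Matrix.mul_sub, Matrix.mul_one, Matrix.mul_assoc]
        _ = 0 := hfin
  intro i j hij
  rcases lt_or_gt_of_ne hij with h | h
  · rw [covM_transpose, key (j : ℕ) j i le_rfl h, Matrix.transpose_zero]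
  · exact key (i : ℕ) i j le_rfl h
end
end

section
/- For any random vectors x ∈ L²(Ω, ℝ^m) and z ∈ L²(Ω, ℝ^n), the covariance matrices satisfy E_{xz} (E_{zz})^† E_{zz} = E_{xz}. -/
open MeasureTheory Matrix Finset Filter

noncomputable section

/-- Existence of a Moore–Penrose pseudoinverse for a real symmetric matrix. -/
lemma exists_isMoorePenrose_of_isHermitian {n : ℕ} (A : Matrix (Fin n) (Fin n) ℝ)
    (hA : A.IsHermitian) : ∃ B, IsMoorePenrose A B := by
  classical
  set U : Matrix (Fin n) (Fin n) ℝ := (Matrix.IsHermitian.eigenvectorUnitary hA :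
    Matrix (Fin n) (Fin n) ℝ) with hUdef
  set d : Fin n → ℝ := hA.eigenvalues with hddef
  have hU : U * star U = 1 :=
    Matrix.mem_unitaryGroup_iff.mp (Matrix.IsHermitian.eigenvectorUnitary hA).2
  have hU' : star U * U = 1 :=
    Matrix.mem_unitaryGroup_iff'.mp (Matrix.IsHermitian.eigenvectorUnitary hA).2
  have hAeq : A = U * Matrix.diagonal d * star U := by
    have := hA.spectral_theorem
    simpa using this
  set d' : Fin n → ℝ := fun i => if d i = 0 then 0 else (d i)⁻¹ with hd'def
  -- product of two "conjugated diagonals"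
  have key : ∀ e f : Fin n → ℝ,
      (U * Matrix.diagonal e * star U) * (U * Matrix.diagonal f * star U)
        = U * Matrix.diagonal (e * f) * star U := by
    intro e f
    calc (U * Matrix.diagonal e * star U) * (U * Matrix.diagonal f * star U)
        = U * Matrix.diagonal e * (star U * U) * Matrix.diagonal f * star U := by
          simp only [Matrix.mul_assoc]
      _ = U * (Matrix.diagonal e * Matrix.diagonal f) * star U := by
          rw [hU']; simp only [Matrix.mul_one, Matrix.mul_assoc]
      _ = U * Matrix.diagonal (e * f) * star U := by
          rw [Matrix.diagonal_mul_diagonal]; rfl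
  have hsym : ∀ e : Fin n → ℝ, (U * Matrix.diagonal e * star U)ᵀ
      = U * Matrix.diagonal e * star U := by
    intro e
    rw [← Matrix.conjTranspose_eq_transpose_of_trivial]
    simp [Matrix.mul_assoc, Matrix.star_eq_conjTranspose, Matrix.diagonal_conjTranspose]
  have hdd : d * d' * d = d := by
    funext i
    by_cases h : d i = 0
    · simp [hd'def, Pi.mul_apply, h]
    · simp only [hd'def, Pi.mul_apply, if_neg h]
      field_simp
  have hd'd : d' * d * d' = d' := by
    funext i
    by_cases h : d i = 0
    · simp [hd'def, Pi.mul_apply, h]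
    · simp only [hd'def, Pi.mul_apply, if_neg h]
      field_simp
  refine ⟨U * Matrix.diagonal d' * star U, ?_, ?_, ?_, ?_⟩
  · rw [hAeq, key, key, hdd]
  · rw [hAeq, key, key, hd'd]
  · rw [hAeq, key]; exact hsym _
  · rw [hAeq, key]; exact hsym _

lemma memℒp_component {Ω : Type} [MeasurableSpace Ω] {μ : Measure Ω} {m : ℕ}
    {x : Ω → Fin m → ℝ} (hx : MemLp x 2 μ) (i : Fin m) :
    MemLp (fun ω => x ω i) 2 μ :=
  MemLp.of_le hx ((continuous_apply i).comp_aestronglyMeasurable hx.1)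
    (ae_of_all _ fun ω => norm_le_pi_norm (x ω) i)

lemma integrable_mul_of_memℒp_two {Ω : Type} [MeasurableSpace Ω] {μ : Measure Ω}
    {f g : Ω → ℝ} (hf : MemLp f 2 μ) (hg : MemLp g 2 μ) :
    Integrable (fun ω => f ω * g ω) μ := by
  refine (hf.integrable_sq.add hg.integrable_sq).mono' (hf.1.mul hg.1) (ae_of_all _ fun ω => ?_)
  simp only [Pi.add_apply, Real.norm_eq_abs]
  exact abs_le.mpr ⟨by nlinarith [sq_nonneg (f ω + g ω)], by nlinarith [sq_nonneg (f ω - g ω)]⟩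

lemma covM_kernel {Ω : Type} [MeasurableSpace Ω] (μ : Measure Ω) [IsProbabilityMeasure μ]
    {m n : ℕ} {x : Ω → Fin m → ℝ} {z : Ω → Fin n → ℝ}
    (hx : MemLp x 2 μ) (hz : MemLp z 2 μ) (v : Fin n → ℝ)
    (hv : covM μ z z *ᵥ v = 0) : covM μ x z *ᵥ v = 0 := by
  classical
  set f : Ω → ℝ := fun ω => ∑ j, v j * z ω j with hfdef
  have hzz : ∀ (j k : Fin n), Integrable (fun ω => z ω j * z ω k) μ := fun j k =>
    integrable_mul_of_memℒp_two (memℒp_component hz j) (memℒp_component hz k)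
  have hxz : ∀ (i : Fin m) (j : Fin n), Integrable (fun ω => x ω i * z ω j) μ := fun i j =>
    integrable_mul_of_memℒp_two (memℒp_component hx i) (memℒp_component hz j)
  have hf2 : MemLp f 2 μ := by
    have := memLp_finset_sum (Finset.univ : Finset (Fin n))
      (f := fun j ω => v j * z ω j)
      (fun j _ => (memℒp_component hz j).const_mul (v j))
    simpa [hfdef] using this
  -- ∫ f² = v ⬝ (covM z z *ᵥ v) = 0
  have hint : ∫ ω, f ω ^ 2 ∂μ = 0 := by
    have expand : ∀ ω, f ω ^ 2 = ∑ j, ∑ k, v j * (z ω j * z ω k * v k) := by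
      intro ω
      simp only [hfdef, sq, Finset.sum_mul_sum]
      apply Finset.sum_congr rfl; intro j _
      apply Finset.sum_congr rfl; intro k _
      ring
    calc ∫ ω, f ω ^ 2 ∂μ
        = ∑ j, ∑ k, v j * ((∫ ω, z ω j * z ω k ∂μ) * v k) := by
          simp_rw [expand]
          rw [integral_finset_sum _ (fun j _ => ?_)]
          · apply Finset.sum_congr rfl; intro j _
            rw [integral_finset_sum _ (fun k _ => ((hzz j k).mul_const (v k)).const_mul (v j))]
            apply Finset.sum_congr rfl; intro k _
            rw [integral_const_mul, integral_mul_const]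
          · exact integrable_finset_sum _ fun k _ =>
              ((hzz j k).mul_const (v k)).const_mul (v j)
      _ = v ⬝ᵥ (covM μ z z *ᵥ v) := by
          simp [dotProduct, Matrix.mulVec, covM, Finset.mul_sum]
      _ = 0 := by rw [hv]; simp
  have hfzero : f =ᵐ[μ] 0 := by
    have h0 : (fun ω => f ω ^ 2) =ᵐ[μ] 0 :=
      (integral_eq_zero_iff_of_nonneg (fun ω => sq_nonneg (f ω)) hf2.integrable_sq).mp hint
    filter_upwards [h0] with ω hω
    simpa [pow_eq_zero_iff] using hω
  funext i
  have expand : ∀ ω, x ω i * f ω = ∑ j, (x ω i * z ω j) * v j := by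
    intro ω
    rw [hfdef, Finset.mul_sum]
    exact Finset.sum_congr rfl fun j _ => by ring
  have hcol : (covM μ x z *ᵥ v) i = ∫ ω, x ω i * f ω ∂μ := by
    simp only [Matrix.mulVec, dotProduct, covM, Matrix.of_apply]
    simp_rw [expand]
    rw [integral_finset_sum _ (fun j _ => (hxz i j).mul_const (v j))]
    exact Finset.sum_congr rfl fun j _ => (integral_mul_const _ _).symm
  rw [hcol]
  have : (fun ω => x ω i * f ω) =ᵐ[μ] 0 := by
    filter_upwards [hfzero] with ω hω
    simp [hω]
  rw [integral_congr_ae this]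
  simp

/-- `E_{xz} (E_{zz})^† E_{zz} = E_{xz}`. -/
theorem stmt1 {Ω : Type} [MeasurableSpace Ω] (μ : Measure Ω) [IsProbabilityMeasure μ]
    {m n : ℕ} (x : Ω → Fin m → ℝ) (z : Ω → Fin n → ℝ)
    (hx : MemLp x 2 μ) (hz : MemLp z 2 μ) :
    covM μ x z * mpinv (covM μ z z) * covM μ z z = covM μ x z := by
  classical
  set A := covM μ z z with hAdef
  set C := covM μ x z with hCdef
  have hA : A.IsHermitian := by
    ext i j
    simp [hAdef, covM, Matrix.conjTranspose_apply, mul_comm]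
  have hB : IsMoorePenrose A (mpinv A) :=
    Classical.epsilon_spec (exists_isMoorePenrose_of_isHermitian A hA)
  set P := mpinv A * A with hPdef
  have hAP : A * P = A := by rw [hPdef, ← Matrix.mul_assoc]; exact hB.1
  rw [Matrix.mul_assoc, ← hPdef]
  ext i j
  set e : Fin n → ℝ := Pi.single j 1 with hedef
  set w : Fin n → ℝ := (fun k => P k j) - e with hwdef
  have hAw : A *ᵥ w = 0 := by
    rw [hwdef, Matrix.mulVec_sub]
    have h1 : A *ᵥ (fun k => P k j) = fun i => (A * P) i j := by
      funext i; simp [Matrix.mulVec, dotProduct, Matrix.mul_apply]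
    have h2 : A *ᵥ e = fun i => A i j := by
      funext i; simp [hedef, Matrix.mulVec_single]
    rw [h1, h2, hAP]
    funext i; simp
  have hCw : C *ᵥ w = 0 := covM_kernel μ hx hz w hAw
  have := congrFun hCw i
  rw [hwdef, Matrix.mulVec_sub] at this
  have h1 : C *ᵥ (fun k => P k j) = fun i => (C * P) i j := by
    funext i; simp [Matrix.mulVec, dotProduct, Matrix.mul_apply]
  have h2 : C *ᵥ e = fun i => C i j := by
    funext i; simp [hedef, Matrix.mulVec_single]
  rw [h1, h2] at this
  simpa [sub_eq_zero] using this
end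
end

section
/- Let x ∈ L²(Ω, ℝ^m) and let z_0, …, z_p be pairwise uncorrelated random vectors with z_j ∈ L²(Ω, ℝ^{q_j}) (i.e. E_{z_i z_j} = 0 for i ≠ j). Then for any matrices S_0, …, S_p with S_j ∈ ℝ^{m×q_j}: ‖x − Σ_{j=0}^p S_j z_j‖²_Ω = Σ_{j=0}^p ‖x − S_j z_j‖²_Ω − p · tr(E_{xx}). -/
open MeasureTheory Matrix Finset Filter
open scoped ENNReal

noncomputable section

section Aux
variable {Ω : Type} [MeasurableSpace Ω] {μ : Measure Ω}

lemma mulInt {g h : Ω → ℝ} (hg : MemLp g 2 μ) (hh : MemLp h 2 μ) :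
    Integrable (fun ω => g ω * h ω) μ := by
  have h12 : (1 : ℝ≥0∞) / 1 = 1 / 2 + 1 / 2 := by
    rw [ENNReal.div_add_div_same, one_add_one_eq_two, ENNReal.div_self (by norm_num) (by norm_num)]; exact (ENNReal.div_self (by norm_num) (by norm_num)).symm
  exact memLp_one_iff_integrable.mp (hh.smul hg (r := 1))

lemma compL2 {k : ℕ} {y : Ω → Fin k → ℝ} (hy : MemLp y 2 μ) (i : Fin k) :
    MemLp (fun ω => y ω i) 2 μ :=
  (ContinuousLinearMap.proj (R := ℝ) (φ := fun _ : Fin k => ℝ) i).comp_memLp' hy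

end Aux

/-- for pairwise uncorrelated `z_0, …, z_p`,
`‖x − Σ_j S_j z_j‖²_Ω = Σ_j ‖x − S_j z_j‖²_Ω − p · tr(E_{xx})`. -/
theorem stmt3 {Ω : Type} [MeasurableSpace Ω] (μ : Measure Ω) [IsProbabilityMeasure μ]
    {m p : ℕ} (q : Fin (p + 1) → ℕ) (x : Ω → Fin m → ℝ)
    (z : ∀ j, Ω → Fin (q j) → ℝ)
    (hx : MemLp x 2 μ) (hz : ∀ j, MemLp (z j) 2 μ)
    (huncorr : ∀ i j, i ≠ j → covM μ (z i) (z j) = 0)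
    (S : ∀ j, Matrix (Fin m) (Fin (q j)) ℝ) :
    sqnormOm μ (fun ω => x ω - ∑ j, S j *ᵥ z j ω)
      = (∑ j, sqnormOm μ (fun ω => x ω - S j *ᵥ z j ω)) - p * (covM μ x x).trace := by
  classical
  set f : Fin (p+1) → Ω → Fin m → ℝ := fun j ω => S j *ᵥ z j ω with hfdef
  have hxi : ∀ i, MemLp (fun ω => x ω i) 2 μ := fun i => compL2 hx i
  have hzi : ∀ j k, MemLp (fun ω => z j ω k) 2 μ := fun j k => compL2 (hz j) k
  have hfapp : ∀ j ω i, f j ω i = ∑ k, S j i k * z j ω k := by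
    intro j ω i
    simp [f, Matrix.mulVec, dotProduct]
  have hfi : ∀ j i, MemLp (fun ω => f j ω i) 2 μ := by
    intro j i
    have : (fun ω => f j ω i) = fun ω => ∑ k, S j i k * z j ω k := by
      ext ω; exact hfapp j ω i
    rw [this]
    exact memLp_finset_sum _ fun k _ => (hzi j k).const_mul _
  -- scalar quantities
  set A : ℝ := ∫ ω, ∑ i, (x ω i)^2 ∂μ with hA
  set B : Fin (p+1) → ℝ := fun j => ∫ ω, ∑ i, x ω i * f j ω i ∂μ with hB
  set C : Fin (p+1) → ℝ := fun j => ∫ ω, ∑ i, (f j ω i)^2 ∂μ with hC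
  have intA : Integrable (fun ω => ∑ i, (x ω i)^2) μ :=
    integrable_finset_sum _ fun i _ => by simpa [sq] using mulInt (hxi i) (hxi i)
  have intB : ∀ j, Integrable (fun ω => ∑ i, x ω i * f j ω i) μ := fun j =>
    integrable_finset_sum _ fun i _ => mulInt (hxi i) (hfi j i)
  have intFF : ∀ j k, Integrable (fun ω => ∑ i, f j ω i * f k ω i) μ := fun j k =>
    integrable_finset_sum _ fun i _ => mulInt (hfi j i) (hfi k i)
  -- trace of covariance = A
  have htrace : (covM μ x x).trace = A := by
    rw [Matrix.trace, hA, integral_finset_sum _ fun i _ => by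
      simpa [sq] using mulInt (hxi i) (hxi i)]
    refine Finset.sum_congr rfl fun i _ => ?_
    simp [covM, Matrix.diag, sq]
  -- orthogonality
  have intprod : ∀ j k a b, Integrable (fun ω => z j ω a * z k ω b) μ :=
    fun j k a b => mulInt (hzi j a) (hzi k b)
  have horth : ∀ j k, j ≠ k → (∫ ω, ∑ i, f j ω i * f k ω i ∂μ) = 0 := by
    intro j k hjk
    have h1 : ∀ ω, ∑ i, f j ω i * f k ω i
        = ∑ i, ∑ a, ∑ b, S j i a * S k i b * (z j ω a * z k ω b) := by
      intro ω
      refine Finset.sum_congr rfl fun i _ => ?_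
      rw [hfapp, hfapp, Finset.sum_mul_sum]
      exact Finset.sum_congr rfl fun a _ => Finset.sum_congr rfl fun b _ => by ring
    calc (∫ ω, ∑ i, f j ω i * f k ω i ∂μ)
        = ∫ ω, ∑ i, ∑ a, ∑ b, S j i a * S k i b * (z j ω a * z k ω b) ∂μ := by
          exact integral_congr_ae (Filter.Eventually.of_forall h1)
      _ = ∑ i, ∑ a, ∑ b, S j i a * S k i b * ∫ ω, z j ω a * z k ω b ∂μ := by
          rw [integral_finset_sum _ fun i _ => integrable_finset_sum _ fun a _ =>
            integrable_finset_sum _ fun b _ => (intprod j k a b).const_mul _]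
          refine Finset.sum_congr rfl fun i _ => ?_
          rw [integral_finset_sum _ fun a _ =>
            integrable_finset_sum _ fun b _ => (intprod j k a b).const_mul _]
          refine Finset.sum_congr rfl fun a _ => ?_
          rw [integral_finset_sum _ fun b _ => (intprod j k a b).const_mul _]
          exact Finset.sum_congr rfl fun b _ => integral_const_mul _ _
      _ = 0 := by
          refine Finset.sum_eq_zero fun i _ => Finset.sum_eq_zero fun a _ =>
            Finset.sum_eq_zero fun b _ => ?_
          have h0 : (∫ ω, z j ω a * z k ω b ∂μ) = 0 := by
            have := congrFun (congrFun (huncorr j k hjk) a) b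
            simpa [covM] using this
          rw [h0, mul_zero]
  -- generic expansion
  have expand : ∀ (y : Ω → Fin m → ℝ), (∀ i, MemLp (fun ω => y ω i) 2 μ) →
      (∫ ω, ∑ i, (x ω i - y ω i)^2 ∂μ)
        = A - 2 * (∫ ω, ∑ i, x ω i * y ω i ∂μ) + (∫ ω, ∑ i, (y ω i)^2 ∂μ) := by
    intro y hy
    have intY : Integrable (fun ω => ∑ i, (y ω i)^2) μ :=
      integrable_finset_sum _ fun i _ => by simpa [sq] using mulInt (hy i) (hy i)
    have intXY : Integrable (fun ω => ∑ i, x ω i * y ω i) μ :=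
      integrable_finset_sum _ fun i _ => mulInt (hxi i) (hy i)
    have hptw : ∀ ω, ∑ i, (x ω i - y ω i)^2
        = ((∑ i, (x ω i)^2) - 2*(∑ i, x ω i * y ω i)) + ∑ i, (y ω i)^2 := by
      intro ω
      rw [Finset.mul_sum, ← Finset.sum_sub_distrib, ← Finset.sum_add_distrib]
      exact Finset.sum_congr rfl fun i _ => by ring
    calc (∫ ω, ∑ i, (x ω i - y ω i)^2 ∂μ)
        = ∫ ω, ((∑ i, (x ω i)^2) - 2*(∑ i, x ω i * y ω i)) + ∑ i, (y ω i)^2 ∂μ :=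
          integral_congr_ae (Filter.Eventually.of_forall hptw)
      _ = A - 2 * (∫ ω, ∑ i, x ω i * y ω i ∂μ) + (∫ ω, ∑ i, (y ω i)^2 ∂μ) := by
          have hsub : Integrable
              (fun ω => (∑ i, (x ω i)^2) - 2*(∑ i, x ω i * y ω i)) μ :=
            intA.sub (intXY.const_mul 2)
          have hcm : Integrable (fun ω => 2*(∑ i, x ω i * y ω i)) μ :=
            intXY.const_mul 2
          rw [integral_add hsub intY, integral_sub intA hcm, integral_const_mul]
  -- RHS summands
  have hRHSj : ∀ j, sqnormOm μ (fun ω => x ω - S j *ᵥ z j ω) = A - 2 * B j + C j := by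
    intro j
    have : sqnormOm μ (fun ω => x ω - S j *ᵥ z j ω)
        = ∫ ω, ∑ i, (x ω i - f j ω i)^2 ∂μ := by
      unfold sqnormOm
      exact integral_congr_ae (Filter.Eventually.of_forall fun ω =>
        Finset.sum_congr rfl fun i _ => by simp [f])
    rw [this, expand _ (hfi j)]
  -- LHS
  set y0 : Ω → Fin m → ℝ := fun ω => ∑ j, f j ω with hy0
  have hy0i : ∀ i, MemLp (fun ω => y0 ω i) 2 μ := by
    intro i
    have : (fun ω => y0 ω i) = fun ω => ∑ j, f j ω i := by
      ext ω; simp [y0]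
    rw [this]
    exact memLp_finset_sum _ fun j _ => hfi j i
  have hLHS : sqnormOm μ (fun ω => x ω - ∑ j, S j *ᵥ z j ω)
      = A - 2 * (∫ ω, ∑ i, x ω i * y0 ω i ∂μ) + (∫ ω, ∑ i, (y0 ω i)^2 ∂μ) := by
    have : sqnormOm μ (fun ω => x ω - ∑ j, S j *ᵥ z j ω)
        = ∫ ω, ∑ i, (x ω i - y0 ω i)^2 ∂μ := by
      unfold sqnormOm
      exact integral_congr_ae (Filter.Eventually.of_forall fun ω =>
        Finset.sum_congr rfl fun i _ => by simp [y0, f])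
    rw [this, expand _ hy0i]
  -- cross term: ∫ ⟨x, y0⟩ = ∑ j B j
  have hXB : (∫ ω, ∑ i, x ω i * y0 ω i ∂μ) = ∑ j, B j := by
    have h1 : ∀ ω, ∑ i, x ω i * y0 ω i = ∑ j, ∑ i, x ω i * f j ω i := by
      intro ω
      rw [Finset.sum_comm]
      refine Finset.sum_congr rfl fun i _ => ?_
      simp [y0, Finset.mul_sum]
    rw [integral_congr_ae (Filter.Eventually.of_forall h1),
      integral_finset_sum _ fun j _ => intB j]
  -- square term
  have hYC : (∫ ω, ∑ i, (y0 ω i)^2 ∂μ) = ∑ j, C j := by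
    have h1 : ∀ ω, ∑ i, (y0 ω i)^2 = ∑ j, ∑ k, ∑ i, f j ω i * f k ω i := by
      intro ω
      have h2 : ∀ i : Fin m, (y0 ω i)^2 = ∑ j, ∑ k, f j ω i * f k ω i := by
        intro i
        have hyi : y0 ω i = ∑ j, f j ω i := by simp [y0]
        rw [hyi, sq, Finset.sum_mul_sum]
      calc ∑ i, (y0 ω i)^2 = ∑ i, ∑ j, ∑ k, f j ω i * f k ω i :=
            Finset.sum_congr rfl fun i _ => h2 i
        _ = ∑ j, ∑ i : Fin m, ∑ k, f j ω i * f k ω i := Finset.sum_comm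
        _ = ∑ j, ∑ k, ∑ i, f j ω i * f k ω i :=
            Finset.sum_congr rfl fun j _ => Finset.sum_comm
    calc (∫ ω, ∑ i, (y0 ω i)^2 ∂μ)
        = ∫ ω, ∑ j, ∑ k, ∑ i, f j ω i * f k ω i ∂μ :=
          integral_congr_ae (Filter.Eventually.of_forall h1)
      _ = ∑ j, ∑ k, ∫ ω, ∑ i, f j ω i * f k ω i ∂μ := by
          rw [integral_finset_sum _ fun j _ => integrable_finset_sum _ fun k _ => intFF j k]
          exact Finset.sum_congr rfl fun j _ =>
            integral_finset_sum _ fun k _ => intFF j k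
      _ = ∑ j, C j := by
          refine Finset.sum_congr rfl fun j _ => ?_
          rw [Finset.sum_eq_single j (fun k _ hk => horth j k (Ne.symm hk))
            (fun h => absurd (Finset.mem_univ j) h)]
          simp only [hC]
          exact integral_congr_ae (Filter.Eventually.of_forall fun ω =>
            Finset.sum_congr rfl fun i _ => (sq (f j ω i)).symm)
  -- assemble
  rw [hLHS, hXB, hYC, htrace,
    Finset.sum_congr rfl fun j _ => hRHSj j]
  rw [Finset.sum_add_distrib, Finset.sum_sub_distrib, Finset.sum_const,
    ← Finset.mul_sum, Finset.card_univ, Fintype.card_fin]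
  ring

end
end

section
/- Let M₁ and M₂ be metric spaces, K₁ ⊆ M₁ and K₂ ⊆ M₂ compact, and f : M₁ × M₂ → ℝ continuous. Suppose sequences (S^{(i)}) ⊆ K₁ and (z^{(i)}) ⊆ K₂ satisfy, for every i, S^{(i+1)} ∈ argmin_{S ∈ K₁} f(S, z^{(i)}) and z^{(i+1)} ∈ argmin_{z ∈ K₂} f(S^{(i+1)}, z), and set P^{(i)} = (S^{(i)}, z^{(i−1)}). Then any cluster point P* = (S*, z*) of the sequence (P^{(i)}) is a coordinate-wise minimum point of f, i.e. S* ∈ argmin_{S ∈ K₁} f(S, z*) and z* ∈ argmin_{z ∈ K₂} f(S*, z). -/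
open MeasureTheory Matrix Finset Filter Topology

noncomputable section

/-- any cluster point `P* = (S*, z*)` of the alternating
minimization sequence `P^{(i)} = (S^{(i)}, z^{(i−1)})` on compact sets is a
coordinate-wise minimum point of the continuous function `f`. -/
theorem stmt18 {M₁ M₂ : Type*} [MetricSpace M₁] [MetricSpace M₂]
    (K₁ : Set M₁) (K₂ : Set M₂) (hK₁ : IsCompact K₁) (hK₂ : IsCompact K₂)
    (f : M₁ → M₂ → ℝ) (hf : Continuous fun P : M₁ × M₂ => f P.1 P.2)
    (S : ℕ → M₁) (z : ℕ → M₂) (hS : ∀ i, S i ∈ K₁) (hz : ∀ i, z i ∈ K₂)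
    (hmin₁ : ∀ i, ∀ S' ∈ K₁, f (S (i + 1)) (z i) ≤ f S' (z i))
    (hmin₂ : ∀ i, ∀ z' ∈ K₂, f (S (i + 1)) (z (i + 1)) ≤ f (S (i + 1)) z')
    (P : ℕ → M₁ × M₂) (hP : ∀ i, P (i + 1) = (S (i + 1), z i))
    (Pstar : M₁ × M₂) (hcluster : MapClusterPt Pstar Filter.atTop P) :
    (∀ S' ∈ K₁, f Pstar.1 Pstar.2 ≤ f S' Pstar.2) ∧
    (∀ z' ∈ K₂, f Pstar.1 Pstar.2 ≤ f Pstar.1 z') := by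
  obtain ⟨φ, hφ, htend⟩ := TopologicalSpace.FirstCountableTopology.tendsto_subseq hcluster
  -- shift so that indices are positive
  set ψ : ℕ → ℕ := fun k => φ (k + 1) - 1 with hψ
  have hφge : ∀ k, k ≤ φ k := fun k => hφ.le_apply
  have hψ1 : ∀ k, ψ k + 1 = φ (k + 1) := fun k =>
    Nat.succ_pred_eq_of_pos (lt_of_lt_of_le (Nat.succ_pos k) (hφge (k + 1)))
  have hψtop : Tendsto ψ atTop atTop := by
    apply tendsto_atTop_mono (fun k => ?_) tendsto_id
    have h1 := hφge (k + 1); have h2 := hψ1 k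
    simp only [id_eq]
    omega
  have htendψ : Tendsto (fun k => P (ψ k + 1)) atTop (𝓝 Pstar) := by
    have : (fun k => P (ψ k + 1)) = (P ∘ φ) ∘ (· + 1) := by
      funext k; simp [hψ1 k]
    rw [this]
    exact htend.comp (tendsto_add_atTop_nat 1)
  have hStend : Tendsto (fun k => S (ψ k + 1)) atTop (𝓝 Pstar.1) := by
    have := (continuous_fst.tendsto Pstar).comp htendψ
    simpa [hP, Function.comp_def] using this
  have hztend : Tendsto (fun k => z (ψ k)) atTop (𝓝 Pstar.2) := by
    have := (continuous_snd.tendsto Pstar).comp htendψ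
    simpa [hP, Function.comp_def] using this
  set a : ℕ → ℝ := fun i => f (S (i + 1)) (z i) with ha
  set b : ℕ → ℝ := fun i => f (S (i + 1)) (z (i + 1)) with hb
  have hba : ∀ i, b i ≤ a i := fun i => hmin₂ i (z i) (hz i)
  have hab : ∀ i, a (i + 1) ≤ b i := fun i => hmin₁ (i + 1) (S (i + 1)) (hS (i + 1))
  have hanti : Antitone a := antitone_nat_of_succ_le fun i => le_trans (hab i) (hba i)
  set L : ℝ := f Pstar.1 Pstar.2 with hL
  have haψ : Tendsto (fun k => a (ψ k)) atTop (𝓝 L) := by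
    have : Tendsto (fun k => (S (ψ k + 1), z (ψ k))) atTop (𝓝 (Pstar.1, Pstar.2)) :=
      hStend.prodMk_nhds hztend
    have := (hf.tendsto (Pstar.1, Pstar.2)).comp this
    simpa [Function.comp_def] using this
  have haL : Tendsto a atTop (𝓝 L) := by
    rcases tendsto_of_antitone hanti with h | ⟨l, hl⟩
    · exact absurd (h.comp hψtop) (not_tendsto_atBot_of_tendsto_nhds haψ)
    · have h2 := hl.comp hψtop
      exact tendsto_nhds_unique h2 haψ ▸ hl
  have hbL : Tendsto b atTop (𝓝 L) := by
    refine tendsto_of_tendsto_of_tendsto_of_le_of_le ?_ haL hab hba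
    exact haL.comp (tendsto_add_atTop_nat 1)
  constructor
  · intro S' hS'
    have hle : ∀ k, a (ψ k) ≤ f S' (z (ψ k)) := fun k => hmin₁ (ψ k) S' hS'
    have hrhs : Tendsto (fun k => f S' (z (ψ k))) atTop (𝓝 (f S' Pstar.2)) := by
      have hc : Continuous fun y : M₂ => f S' y :=
        hf.comp (Continuous.prodMk_right S')
      exact (hc.tendsto _).comp hztend
    exact le_of_tendsto_of_tendsto' haψ hrhs hle
  · intro z' hz'
    have hle : ∀ k, b (ψ k) ≤ f (S (ψ k + 1)) z' := fun k => hmin₂ (ψ k) z' hz'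
    have hbψ : Tendsto (fun k => b (ψ k)) atTop (𝓝 L) := hbL.comp hψtop
    have hrhs : Tendsto (fun k => f (S (ψ k + 1)) z') atTop (𝓝 (f Pstar.1 z')) := by
      have hc : Continuous fun s : M₁ => f s z' :=
        hf.comp (continuous_id.prodMk continuous_const)
      exact (hc.tendsto _).comp hStend
    exact le_of_tendsto_of_tendsto' hbψ hrhs hle

end
end
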